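/- The complex number z₀ = (3 + 4i)/5 is not a root of any polynomial q ∈ ℤ[t] with q(1) = ±1. -/

import Mathlib

open Polynomial

/-- The complex number `z₀ = (3 + 4i)/5` is not a root of any integer polynomial `q` with
`q(1) = ±1`. -/
theorem stmt4 :
    ¬ ∃ q : Polynomial ℤ,
        (q.eval 1 = 1 ∨ q.eval 1 = -1) ∧
        Polynomial.eval₂ (Int.castRingHom ℂ) ((3 + 4 * Complex.I) / 5) q = 0 := by
  rintro ⟨q, hq1, hq0⟩
  set Q : Polynomial ℤ := q.scaleRoots 5 with hQ
  set n := q.natDegree with hn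
  -- Q(3+4i) = 0 in ℂ
  have key : eval₂ (Int.castRingHom ℂ) (3 + 4 * Complex.I) Q = 0 := by
    have := scaleRoots_eval₂_eq_zero (Int.castRingHom ℂ)
      (r := (3 + 4 * Complex.I) / 5) (s := 5) hq0
    have h5 : (Int.castRingHom ℂ) 5 * ((3 + 4 * Complex.I) / 5) = 3 + 4 * Complex.I := by
      rw [show ((Int.castRingHom ℂ) 5 : ℂ) = 5 by norm_num]
      field_simp
    rwa [h5] at this
  -- transfer to ℤ[i]
  set z : GaussianInt := ⟨3, 4⟩ with hz
  have hzc : (GaussianInt.toComplex z) = 3 + 4 * Complex.I := by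
    simp [GaussianInt.toComplex_def, hz]
  have hcomp : GaussianInt.toComplex.comp (Int.castRingHom GaussianInt)
      = Int.castRingHom ℂ := by
    ext1
    simp
  have key2 : eval₂ (Int.castRingHom GaussianInt) z Q = 0 := by
    apply GaussianInt.toComplex_injective
    rw [hom_eval₂, hcomp, hzc, key, map_zero]
  -- Q(5) = ±5^n in ℤ[i]
  have key5 : eval₂ (Int.castRingHom GaussianInt) 5 Q = ((5:ℤ)^n * q.eval 1 : ℤ) := by
    have := scaleRoots_eval₂_mul (Int.castRingHom GaussianInt) (1 : GaussianInt) (5 : ℤ) (p := q)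
    rw [mul_one, eval₂_at_one] at this
    rw [show ((Int.castRingHom GaussianInt) 5) = (5 : GaussianInt) by norm_num] at this
    rw [this]
    simp [eq_intCast, mul_comm]
    exact Or.inl rfl
  -- divisibility
  have hdvd : (5 - z) ∣ ((5:ℤ)^n * q.eval 1 : ℤ) := by
    have := Polynomial.sub_dvd_eval_sub (5 : GaussianInt) z (Q.map (Int.castRingHom GaussianInt))
    rw [eval_map, eval_map, key2, key5, sub_zero] at this
    exact this
  -- take norms
  obtain ⟨c, hc⟩ := hdvd
  have hnorm := congrArg Zsqrtd.norm hc
  rw [Zsqrtd.norm_mul, Zsqrtd.norm_intCast] at hnorm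
  have h5z : (5 - z : GaussianInt) = (⟨2, -4⟩ : GaussianInt) := by
    rw [hz]
    ext <;> simp [Zsqrtd.ext_iff]
  rw [h5z] at hnorm
  have hn20 : Zsqrtd.norm (⟨2, -4⟩ : GaussianInt) = 20 := by decide
  rw [hn20] at hnorm
  -- hnorm : (5^n * q.eval 1) * (5^n * q.eval 1) = 20 * c.norm
  have hq1sq : q.eval 1 * q.eval 1 = 1 := by rcases hq1 with h | h <;> rw [h] <;> ring
  have h25 : (25:ℤ)^n = 20 * c.norm := by
    have : (5:ℤ)^n * q.eval 1 * ((5:ℤ)^n * q.eval 1) = (25:ℤ)^n := by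
      rw [show (25:ℤ) = 5 * 5 by norm_num, mul_pow]
      nlinarith [hq1sq]
    linarith [hnorm, this]
  -- contradiction: 4 ∣ 25^n but 25^n ≡ 1 mod 4
  have hmod : (25:ℤ)^n % 4 = 1 := by
    induction n with
    | zero => norm_num
    | succ k ih => rw [pow_succ]; omega
  omega
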